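/- arXiv:1309.1031 — 2 statements merged into one kernel-verified Lean document; each statement's English description precedes it below -/
import Mathlib

section
/- The set 𝕀 = [0,1]² \ {(0,r) : r > 0} with the lexicographic order is a complete lattice: every subset of 𝕀 has a least upper bound and a greatest lower bound in 𝕀. -/
/-- The truth-value set `𝕀 = [0,1]² \ {(0,r) : r > 0}` inside `[0,1]×[0,1]`
with the lexicographic order. -/
def II : Set (Lex (ℝ × ℝ)) :=
  {p | 0 ≤ (ofLex p).1 ∧ (ofLex p).1 ≤ 1 ∧ 0 ≤ (ofLex p).2 ∧ (ofLex p).2 ≤ 1 ∧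
       ((ofLex p).1 ≠ 0 ∨ (ofLex p).2 = 0)}

private lemma lexle {x y u v : ℝ} :
    toLex (x, y) ≤ toLex (u, v) ↔ x < u ∨ (x = u ∧ y ≤ v) := Prod.Lex.le_iff

private lemma memII {x y : ℝ} :
    toLex (x, y) ∈ II ↔ 0 ≤ x ∧ x ≤ 1 ∧ 0 ≤ y ∧ y ≤ 1 ∧ (x ≠ 0 ∨ y = 0) := Iff.rfl

private lemma II_coords (p : ↥II) :
    0 ≤ (ofLex p.val).1 ∧ (ofLex p.val).1 ≤ 1 ∧ 0 ≤ (ofLex p.val).2 ∧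
      (ofLex p.val).2 ≤ 1 ∧ ((ofLex p.val).1 ≠ 0 ∨ (ofLex p.val).2 = 0) := p.2

private lemma val_eq (p : ↥II) : p.val = toLex ((ofLex p.val).1, (ofLex p.val).2) := rfl

/-- `𝕀` is a complete lattice: every subset of `𝕀` has a least upper bound and a
greatest lower bound in `𝕀`. -/
theorem II_complete (S : Set ↥II) :
    (∃ a : ↥II, IsLUB S a) ∧ (∃ b : ↥II, IsGLB S b) := by
  set X : Set ℝ := {x | ∃ p ∈ S, (ofLex p.val).1 = x} with hX
  have hX0 : ∀ x ∈ X, 0 ≤ x := by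
    rintro x ⟨p, _, rfl⟩; exact (II_coords p).1
  have hX1 : ∀ x ∈ X, x ≤ 1 := by
    rintro x ⟨p, _, rfl⟩; exact (II_coords p).2.1
  constructor
  · -- LUB
    set a : ℝ := sSup X with ha
    set Y : Set ℝ := {y | ∃ p ∈ S, ofLex p.val = (a, y)} with hY
    have hY0 : ∀ y ∈ Y, 0 ≤ y := by
      rintro y ⟨p, _, hp⟩
      have := (II_coords p).2.2.1; rw [hp] at this; exact this
    have hY1 : ∀ y ∈ Y, y ≤ 1 := by
      rintro y ⟨p, _, hp⟩
      have := (II_coords p).2.2.2.1; rw [hp] at this; exact this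
    set b : ℝ := sSup Y with hb
    have ha0 : 0 ≤ a := Real.sSup_nonneg hX0
    have ha1 : a ≤ 1 := Real.sSup_le hX1 zero_le_one
    have hb0 : 0 ≤ b := Real.sSup_nonneg hY0
    have hb1 : b ≤ 1 := Real.sSup_le hY1 zero_le_one
    have hmem : toLex (a, b) ∈ II := by
      rw [memII]
      refine ⟨ha0, ha1, hb0, hb1, ?_⟩
      by_cases h : a = 0
      · right
        have hble : b ≤ 0 := by
          apply Real.sSup_le _ le_rfl
          rintro y ⟨p, _, hp⟩
          rcases (II_coords p).2.2.2.2 with h1 | h1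
          · exfalso; apply h1; rw [hp, h]
          · rw [hp] at h1; exact le_of_eq h1
        exact le_antisymm hble hb0
      · left; exact h
    refine ⟨⟨toLex (a, b), hmem⟩, ?_, ?_⟩
    · -- upper bound
      intro p hp
      rw [← Subtype.coe_le_coe, val_eq p]
      rw [lexle]
      have hxa : (ofLex p.val).1 ≤ a :=
        le_csSup ⟨1, fun x hx => hX1 x hx⟩ ⟨p, hp, rfl⟩
      rcases lt_or_eq_of_le hxa with h | h
      · exact Or.inl h
      · refine Or.inr ⟨h, ?_⟩
        refine le_csSup ⟨1, fun y hy => hY1 y hy⟩ ⟨p, hp, ?_⟩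
        rw [← h]
    · -- least
      intro q hq
      rw [← Subtype.coe_le_coe, val_eq q]
      obtain ⟨hu0, _, hv0, _, _⟩ := II_coords q
      set u := (ofLex q.val).1
      set v := (ofLex q.val).2
      have hau : a ≤ u := by
        apply Real.sSup_le _ hu0
        rintro x ⟨p, hp, rfl⟩
        have := hq hp
        rw [← Subtype.coe_le_coe, val_eq p, val_eq q, lexle] at this
        rcases this with h | h
        · exact le_of_lt h
        · exact le_of_eq h.1
      rw [lexle]
      rcases lt_or_eq_of_le hau with h | h
      · exact Or.inl h
      · refine Or.inr ⟨h, ?_⟩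
        apply Real.sSup_le _ hv0
        rintro y ⟨p, hp, hpeq⟩
        have := hq hp
        rw [← Subtype.coe_le_coe, val_eq p, val_eq q, lexle, hpeq] at this
        rcases this with h' | h'
        · exact absurd (h ▸ h') (lt_irrefl a)
        · exact h'.2
  · -- GLB
    rcases Set.eq_empty_or_nonempty S with rfl | hSne
    · -- empty: top element (1,1)
      have hmem : toLex ((1:ℝ), (1:ℝ)) ∈ II := by
        rw [memII]; exact ⟨zero_le_one, le_rfl, zero_le_one, le_rfl, Or.inl one_ne_zero⟩
      refine ⟨⟨toLex (1, 1), hmem⟩, fun p hp => absurd hp (Set.notMem_empty p), ?_⟩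
      intro q _
      rw [← Subtype.coe_le_coe, val_eq q, lexle]
      obtain ⟨_, hu1, _, hv1, _⟩ := II_coords q
      rcases lt_or_eq_of_le hu1 with h | h
      · exact Or.inl h
      · exact Or.inr ⟨h, hv1⟩
    · set a : ℝ := sInf X with ha
      have hXne : X.Nonempty := ⟨_, hSne.choose, hSne.choose_spec, rfl⟩
      have hXbdd : BddBelow X := ⟨0, fun x hx => hX0 x hx⟩
      have ha0 : 0 ≤ a := Real.sInf_nonneg hX0
      have ha1 : a ≤ 1 := le_trans (csInf_le hXbdd hXne.choose_spec) (hX1 _ hXne.choose_spec)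
      set Y : Set ℝ := {y | ∃ p ∈ S, ofLex p.val = (a, y)} with hY
      have hY0 : ∀ y ∈ Y, 0 ≤ y := by
        rintro y ⟨p, _, hp⟩
        have := (II_coords p).2.2.1; rw [hp] at this; exact this
      have hY1 : ∀ y ∈ Y, y ≤ 1 := by
        rintro y ⟨p, _, hp⟩
        have := (II_coords p).2.2.2.1; rw [hp] at this; exact this
      by_cases hatt : Y.Nonempty
      · -- infimum of first coordinates attained
        set b : ℝ := sInf Y with hb
        have hYbdd : BddBelow Y := ⟨0, fun y hy => hY0 y hy⟩
        have hb0 : 0 ≤ b := Real.sInf_nonneg hY0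
        have hb1 : b ≤ 1 := le_trans (csInf_le hYbdd hatt.choose_spec) (hY1 _ hatt.choose_spec)
        have hmem : toLex (a, b) ∈ II := by
          rw [memII]
          refine ⟨ha0, ha1, hb0, hb1, ?_⟩
          by_cases h : a = 0
          · right
            have : b ≤ 0 := by
              obtain ⟨y, p, hpS, hp⟩ := hatt
              have h5 := (II_coords p).2.2.2.2
              rw [hp] at h5
              rcases h5 with h1 | h1
              · exact absurd h h1
              · calc b ≤ y := csInf_le hYbdd ⟨p, hpS, hp⟩
                  _ = 0 := h1
            exact le_antisymm this hb0
          · left; exact h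
        refine ⟨⟨toLex (a, b), hmem⟩, ?_, ?_⟩
        · -- lower bound
          intro p hp
          rw [← Subtype.coe_le_coe, val_eq p, lexle]
          have hax : a ≤ (ofLex p.val).1 := csInf_le hXbdd ⟨p, hp, rfl⟩
          rcases lt_or_eq_of_le hax with h | h
          · exact Or.inl h
          · refine Or.inr ⟨h, csInf_le hYbdd ⟨p, hp, ?_⟩⟩
            rw [h]
        · -- greatest
          intro q hq
          rw [← Subtype.coe_le_coe, val_eq q, lexle]
          set u := (ofLex q.val).1
          set v := (ofLex q.val).2
          have hua : u ≤ a := by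
            apply le_csInf hXne
            rintro x ⟨p, hp, rfl⟩
            have := hq hp
            rw [← Subtype.coe_le_coe, val_eq p, val_eq q, lexle] at this
            rcases this with h | h
            · exact le_of_lt h
            · exact le_of_eq h.1
          rcases lt_or_eq_of_le hua with h | h
          · exact Or.inl h
          · refine Or.inr ⟨h, ?_⟩
            apply le_csInf hatt
            rintro y ⟨p, hp, hpeq⟩
            have := hq hp
            rw [← Subtype.coe_le_coe, val_eq p, val_eq q, lexle, hpeq] at this
            rcases this with h' | h'
            · exact absurd (h ▸ h') (lt_irrefl a)
            · exact h'.2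
      · -- not attained
        by_cases h0 : a = 0
        · -- glb is (0,0)
          have hmem : toLex ((0:ℝ), (0:ℝ)) ∈ II := by
            rw [memII]; exact ⟨le_rfl, zero_le_one, le_rfl, zero_le_one, Or.inr rfl⟩
          refine ⟨⟨toLex (0, 0), hmem⟩, ?_, ?_⟩
          · intro p hp
            rw [← Subtype.coe_le_coe, val_eq p, lexle]
            obtain ⟨h1, _, h3, _, h5⟩ := II_coords p
            rcases lt_or_eq_of_le h1 with h | h
            · exact Or.inl h
            · exact Or.inr ⟨h, h3⟩
          · intro q hq
            rw [← Subtype.coe_le_coe, val_eq q, lexle]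
            obtain ⟨hu0, _, _, _, h5⟩ := II_coords q
            have hua : (ofLex q.val).1 ≤ a := by
              apply le_csInf hXne
              rintro x ⟨p, hp, rfl⟩
              have := hq hp
              rw [← Subtype.coe_le_coe, val_eq p, val_eq q, lexle] at this
              rcases this with h | h
              · exact le_of_lt h
              · exact le_of_eq h.1
            have hu : (ofLex q.val).1 = 0 := le_antisymm (h0 ▸ hua) hu0
            refine Or.inr ⟨hu, ?_⟩
            rcases h5 with h5 | h5
            · exact absurd hu h5
            · exact le_of_eq h5
        · -- glb is (a, 1)
          have hmem : toLex (a, (1:ℝ)) ∈ II := by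
            rw [memII]; exact ⟨ha0, ha1, zero_le_one, le_rfl, Or.inl h0⟩
          refine ⟨⟨toLex (a, 1), hmem⟩, ?_, ?_⟩
          · intro p hp
            rw [← Subtype.coe_le_coe, val_eq p, lexle]
            have hax : a ≤ (ofLex p.val).1 := csInf_le hXbdd ⟨p, hp, rfl⟩
            rcases lt_or_eq_of_le hax with h | h
            · exact Or.inl h
            · exact absurd ⟨(ofLex p.val).2, p, hp, by rw [h]⟩ hatt
          · intro q hq
            rw [← Subtype.coe_le_coe, val_eq q, lexle]
            have hua : (ofLex q.val).1 ≤ a := by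
              apply le_csInf hXne
              rintro x ⟨p, hp, rfl⟩
              have := hq hp
              rw [← Subtype.coe_le_coe, val_eq p, val_eq q, lexle] at this
              rcases this with h | h
              · exact le_of_lt h
              · exact le_of_eq h.1
            rcases lt_or_eq_of_le hua with h | h
            · exact Or.inl h
            · exact Or.inr ⟨h, (II_coords q).2.2.2.1⟩
end

section
/- If a theory T in rational Gödel logic is strongly consistent (T does not prove r̄ for any rational r > 0), and φ, ψ are sentences, then at least one of T ∪ {φ → ψ} and T ∪ {ψ → φ} is strongly consistent. -/
/-- If `T` is strongly consistent (it proves no truth constant `r̄` with `r > 0`),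
then for any sentences `φ, ψ`, at least one of `T ∪ {φ → ψ}` and `T ∪ {ψ → φ}`
is strongly consistent.  The Hilbert-style proof system of rational Gödel logic is
abstracted by a provability predicate `Prov` satisfying the deduction theorem,
the book-keeping axioms `⊢ r̄ → s̄` for `r ≥ s`, transitivity of implication, and
the prelinearity rule. -/
theorem strongly_consistent_or
    (Sent : Type) (imp : Sent → Sent → Sent) (const : ℚ → Sent)
    (Prov : Set Sent → Sent → Prop)
    (ded : ∀ T φ ψ, Prov (T ∪ {φ}) ψ ↔ Prov T (imp φ ψ))
    (book : ∀ (T : Set Sent) (r s : ℚ), s ≤ r → Prov T (imp (const r) (const s)))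
    (trans : ∀ (T : Set Sent) a b c,
      Prov T (imp a b) → Prov T (imp b c) → Prov T (imp a c))
    (prelin : ∀ (T : Set Sent) φ ψ χ,
      Prov T (imp (imp φ ψ) χ) → Prov T (imp (imp ψ φ) χ) → Prov T χ)
    (T : Set Sent)
    (hT : ∀ r : ℚ, 0 < r → r ≤ 1 → ¬ Prov T (const r))
    (φ ψ : Sent) :
    (∀ r : ℚ, 0 < r → r ≤ 1 → ¬ Prov (T ∪ {imp φ ψ}) (const r)) ∨
    (∀ r : ℚ, 0 < r → r ≤ 1 → ¬ Prov (T ∪ {imp ψ φ}) (const r)) := by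
  by_contra h
  push_neg at h
  obtain ⟨⟨r, hr0, hr1, hr⟩, ⟨s, hs0, hs1, hs⟩⟩ := h
  have h1 : Prov T (imp (imp φ ψ) (const r)) := (ded T _ _).mp hr
  have h2 : Prov T (imp (imp ψ φ) (const s)) := (ded T _ _).mp hs
  set t := min r s with ht
  have h1' := trans T _ _ _ h1 (book T r t (min_le_left r s))
  have h2' := trans T _ _ _ h2 (book T s t (min_le_right r s))
  exact hT t (lt_min hr0 hs0) (le_trans (min_le_left r s) hr1)
    (prelin T φ ψ _ h1' h2')
end
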